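/- For any nonnegative w ∈ ℝ^n with ‖w‖₁ = 1 and Δ = maxᵢ w_i > 0, letting α = 1/Δ − ⌊1/Δ⌋ ∈ [0,1), we have Σᵢ w_i² ≤ Δ·(1 − α(1−α)Δ), equivalently L(w) ≥ 1/(Δ(1 − α(1−α)Δ)). -/

import Mathlib

private lemma frac_step (s t : ℝ) (h0 : 0 ≤ t) (h1 : t ≤ 1) :
    Int.fract (s + t) * (1 - Int.fract (s + t)) ≤
      Int.fract s * (1 - Int.fract s) + t * (1 - t) := by
  have hb0 : 0 ≤ Int.fract s := Int.fract_nonneg s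
  have hb1 : Int.fract s < 1 := Int.fract_lt_one s
  have key : Int.fract (s + t) = Int.fract (Int.fract s + t) := by
    rw [Int.fract_eq_fract]
    exact ⟨⌊s⌋, by have := Int.self_sub_fract s; linarith⟩
  set β := Int.fract s with hβ
  by_cases hc : β + t < 1
  · have : Int.fract (β + t) = β + t := Int.fract_eq_self.mpr ⟨by linarith, hc⟩
    rw [key, this]; nlinarith
  · push_neg at hc
    have : Int.fract (β + t) = β + t - 1 := by
      have h2 : β + t - 1 < 1 := by linarith
      have := Int.fract_eq_self.mpr (⟨by linarith, h2⟩ : 0 ≤ β + t - 1 ∧ β + t - 1 < 1)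
      calc Int.fract (β + t) = Int.fract (β + t - 1 + (1:ℤ)) := by push_cast; ring_nf
        _ = β + t - 1 := by rw [Int.fract_add_intCast]; exact this
    rw [key, this]; nlinarith

private lemma frac_sum {n : ℕ} (t : Fin n → ℝ) (ht : ∀ i, 0 ≤ t i ∧ t i ≤ 1)
    (S : Finset (Fin n)) :
    Int.fract (∑ i ∈ S, t i) * (1 - Int.fract (∑ i ∈ S, t i)) ≤
      ∑ i ∈ S, t i * (1 - t i) := by
  induction S using Finset.induction with
  | empty => simp
  | @insert a S ha ih =>
    rw [Finset.sum_insert ha, Finset.sum_insert ha]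
    calc Int.fract (t a + ∑ i ∈ S, t i) * (1 - Int.fract (t a + ∑ i ∈ S, t i))
        = Int.fract (∑ i ∈ S, t i + t a) * (1 - Int.fract (∑ i ∈ S, t i + t a)) := by
          ring_nf
      _ ≤ Int.fract (∑ i ∈ S, t i) * (1 - Int.fract (∑ i ∈ S, t i)) + t a * (1 - t a) :=
          frac_step _ _ (ht a).1 (ht a).2
      _ ≤ ∑ i ∈ S, t i * (1 - t i) + t a * (1 - t a) := by linarith
      _ = t a * (1 - t a) + ∑ i ∈ S, t i * (1 - t i) := by ring

theorem stmt8 (n : ℕ) (hn : 0 < n) (w : Fin n → ℝ)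
    (hw : ∀ i, 0 ≤ w i) (h1 : ∑ i, w i = 1)
    (Δ : ℝ) (hΔdef : Δ = Finset.univ.sup' ⟨⟨0, hn⟩, Finset.mem_univ _⟩ w)
    (hΔ : 0 < Δ)
    (α : ℝ) (hα : α = 1 / Δ - (⌊1 / Δ⌋ : ℝ)) :
    ∑ i, (w i) ^ 2 ≤ Δ * (1 - α * (1 - α) * Δ) ∧
      1 / (Δ * (1 - α * (1 - α) * Δ)) ≤ 1 / ∑ i, (w i) ^ 2 := by
  have hne : (Finset.univ : Finset (Fin n)).Nonempty := ⟨⟨0, hn⟩, Finset.mem_univ _⟩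
  have hle : ∀ i, w i ≤ Δ := by
    intro i; rw [hΔdef]; exact Finset.le_sup' w (Finset.mem_univ i)
  -- t i := w i / Δ
  set t : Fin n → ℝ := fun i => w i / Δ with htdef
  have ht : ∀ i, 0 ≤ t i ∧ t i ≤ 1 := by
    intro i
    constructor
    · exact div_nonneg (hw i) hΔ.le
    · rw [div_le_one hΔ]; exact hle i
  have hsum : ∑ i, t i = 1 / Δ := by
    simp only [htdef, div_eq_mul_inv, ← Finset.sum_mul, h1, one_mul]
  have hkey := frac_sum t ht Finset.univ
  rw [hsum] at hkey
  have hαf : Int.fract (1 / Δ) = α := by rw [hα, Int.fract]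
  rw [hαf] at hkey
  -- Σ t(1-t) relation to Σ w²
  have hexp : ∑ i, t i * (1 - t i) = (1 / Δ) - (∑ i, (w i) ^ 2) / Δ ^ 2 := by
    rw [← hsum, Finset.sum_div, ← Finset.sum_sub_distrib]
    apply Finset.sum_congr rfl
    intro i _
    simp only [htdef]
    ring
  rw [hexp] at hkey
  have hmain : ∑ i, (w i) ^ 2 ≤ Δ * (1 - α * (1 - α) * Δ) := by
    have hΔ2 : (0:ℝ) < Δ ^ 2 := by positivity
    rw [div_sub_div _ _ (ne_of_gt hΔ) (ne_of_gt hΔ2)] at hkey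
    have := (le_div_iff₀ (by positivity : (0:ℝ) < Δ * Δ ^ 2)).mp hkey
    nlinarith [sq_nonneg Δ]
  refine ⟨hmain, ?_⟩
  have hpos : 0 < ∑ i, (w i) ^ 2 := by
    obtain ⟨i₀, _, hi₀⟩ := Finset.exists_mem_eq_sup' hne w
    have hΔeq : Δ = w i₀ := hΔdef.trans hi₀
    have : Δ ^ 2 ≤ ∑ i, (w i) ^ 2 := by
      rw [hΔeq]
      exact Finset.single_le_sum (fun i _ => sq_nonneg (w i)) (Finset.mem_univ i₀)
    nlinarith
  exact one_div_le_one_div_of_le hpos hmain
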